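/- Let p be a prime and s ≥ 1 an integer, and let F ∈ F_p[[x,y]] be the Honda formal group law of height s. Then the p-series of F satisfies [p]_F(x) = x^{p^s} in F_p[[x]]. -/

import Mathlib

open MvPowerSeries Finsupp
open scoped Classical

/-- Substitution of a multivariate power series (with zero constant term)
into a one-variable power series. -/
noncomputable def substPS {σ R : Type*} [CommRing R]
    (g : MvPowerSeries σ R) (f : PowerSeries R) : MvPowerSeries σ R :=
  fun d => ∑ n ∈ Finset.range (d.sum (fun _ k => k) + 1),
    PowerSeries.coeff n f * MvPowerSeries.coeff d (g ^ n)

/-- Substitution of a pair of power series (with zero constant terms) into a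
two-variable power series `F`, i.e. `F(a, b)`. -/
noncomputable def subst2 {σ R : Type*} [CommRing R]
    (a b : MvPowerSeries σ R) (F : MvPowerSeries (Fin 2) R) : MvPowerSeries σ R :=
  fun d => ∑ i ∈ Finset.range (d.sum (fun _ k => k) + 1),
    ∑ j ∈ Finset.range (d.sum (fun _ k => k) + 1),
      MvPowerSeries.coeff (Finsupp.single (0 : Fin 2) i + Finsupp.single 1 j) F *
        MvPowerSeries.coeff d (a ^ i * b ^ j)

/-- The Honda logarithm `l(x) = Σ_{i ≥ 0} p^{-i} x^{p^{s i}}` over `ℚ_p`. -/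
noncomputable def hondaLog (p s : ℕ) [Fact p.Prime] : PowerSeries ℚ_[p] :=
  PowerSeries.mk fun n =>
    if h : ∃ i, n = p ^ (s * i) then (p : ℚ_[p]) ^ (-(Nat.find h : ℤ)) else 0

/-- `F ∈ 𝔽_p[[x,y]]` is the Honda formal group law of height `s`:  it is the coefficientwise
mod `p` reduction of the (unique) power series `F₀` with coefficients in `ℤ_p` and zero
constant term satisfying `l(F₀(x,y)) = l(x) + l(y)` over `ℚ_p`, where `l` is the Honda
logarithm `l(x) = Σ_{i ≥ 0} p^{-i} x^{p^{s i}}`. -/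
def IsHondaFGL (p : ℕ) [Fact p.Prime] (s : ℕ) (F : MvPowerSeries (Fin 2) (ZMod p)) : Prop :=
  ∃ F₀ : MvPowerSeries (Fin 2) ℤ_[p],
    MvPowerSeries.constantCoeff F₀ = 0 ∧
    substPS (MvPowerSeries.map (PadicInt.Coe.ringHom (p := p)) F₀) (hondaLog p s) =
      substPS (MvPowerSeries.X 0) (hondaLog p s) + substPS (MvPowerSeries.X 1) (hondaLog p s) ∧
    F = MvPowerSeries.map (PadicInt.toZMod (p := p)) F₀

/-- The `k`-series `[k]_F` of a two-variable power series `F`: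
`[1]_F(x) = x` and `[k+1]_F(x) = F([k]_F(x), x)`. -/
noncomputable def kSeries {p : ℕ} (F : MvPowerSeries (Fin 2) (ZMod p)) :
    ℕ → PowerSeries (ZMod p)
  | 0 => 0
  | 1 => PowerSeries.X
  | (k + 2) => subst2 (kSeries F (k + 1)) PowerSeries.X F


section Machinery

variable {σ R S : Type*} [CommRing R] [CommRing S]

lemma deg_add (d e : σ →₀ ℕ) :
    (d + e).sum (fun _ k => k) = d.sum (fun _ k => k) + e.sum (fun _ k => k) :=
  Finsupp.sum_add_index' (fun _ => rfl) (fun _ _ _ => rfl)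

lemma eq_zero_of_deg_eq_zero {d : σ →₀ ℕ} (h : d.sum (fun _ k => k) = 0) : d = 0 := by
  ext i
  by_contra hi
  have hmem : i ∈ d.support := Finsupp.mem_support_iff.2 (by simpa using hi)
  have := (Finset.sum_eq_zero_iff.1 h) i hmem
  simp at this
  exact hi (by simpa using this)

lemma coeff_pow_eq_zero {a : MvPowerSeries σ R} (ha : constantCoeff a = 0)
    {d : σ →₀ ℕ} {n : ℕ} (h : d.sum (fun _ k => k) < n) :
    MvPowerSeries.coeff d (a ^ n) = 0 := by
  induction n generalizing d with
  | zero => omega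
  | succ n ih =>
    rw [pow_succ, mul_comm, MvPowerSeries.coeff_mul]
    refine Finset.sum_eq_zero fun q hq => ?_
    rcases eq_or_ne q.1 0 with h1 | h1
    · have : q.2 = d := by
        have := Finset.HasAntidiagonal.mem_antidiagonal.1 hq
        rw [h1, zero_add] at this; exact this
      rw [h1]
      simpa [this] using mul_eq_zero_of_left (by simpa using ha) _
    · refine mul_eq_zero_of_right _ (ih ?_)
      have hsum := Finset.HasAntidiagonal.mem_antidiagonal.1 hq
      have hdeg : q.1.sum (fun _ k => k) + q.2.sum (fun _ k => k) = d.sum (fun _ k => k) := by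
        rw [← deg_add, hsum]
      have h1' : 0 < q.1.sum (fun _ k => k) := by
        rcases Nat.eq_zero_or_pos (q.1.sum (fun _ k => k)) with h0 | h0
        · exact absurd (eq_zero_of_deg_eq_zero h0) h1
        · exact h0
      omega

lemma coeff_mul_pow_eq_zero {a b : MvPowerSeries σ R} (ha : constantCoeff a = 0)
    (hb : constantCoeff b = 0) {d : σ →₀ ℕ} {i j : ℕ}
    (h : d.sum (fun _ k => k) < i + j) :
    MvPowerSeries.coeff d (a ^ i * b ^ j) = 0 := by
  rw [MvPowerSeries.coeff_mul]
  refine Finset.sum_eq_zero fun q hq => ?_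
  have hsum := Finset.HasAntidiagonal.mem_antidiagonal.1 hq
  have hdeg : q.1.sum (fun _ k => k) + q.2.sum (fun _ k => k) = d.sum (fun _ k => k) := by
    rw [← deg_add, hsum]
  rcases lt_or_ge (q.1.sum (fun _ k => k)) i with h1 | h1
  · exact mul_eq_zero_of_left (coeff_pow_eq_zero ha h1) _
  · exact mul_eq_zero_of_right _ (coeff_pow_eq_zero hb (by omega))

lemma coeff_substPS {a : MvPowerSeries σ R} (ha : constantCoeff a = 0)
    (f : PowerSeries R) (d : σ →₀ ℕ) {N : ℕ} (hN : d.sum (fun _ k => k) < N) :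
    MvPowerSeries.coeff d (substPS a f) =
      ∑ n ∈ Finset.range N, PowerSeries.coeff n f * MvPowerSeries.coeff d (a ^ n) := by
  have h0 : MvPowerSeries.coeff d (substPS a f) =
      ∑ n ∈ Finset.range (d.sum (fun _ k => k) + 1),
        PowerSeries.coeff n f * MvPowerSeries.coeff d (a ^ n) := rfl
  rw [h0]
  refine Finset.sum_subset ?_ fun n _ hn => ?_
  · exact Finset.range_subset_range.2 (by omega)
  · have : d.sum (fun _ k => k) < n := by simp at hn ⊢; omega
    exact mul_eq_zero_of_right _ (coeff_pow_eq_zero ha this)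

lemma coeff_subst2 {a b : MvPowerSeries σ R} (ha : constantCoeff a = 0)
    (hb : constantCoeff b = 0) (F : MvPowerSeries (Fin 2) R) (d : σ →₀ ℕ)
    {N : ℕ} (hN : d.sum (fun _ k => k) < N) :
    MvPowerSeries.coeff d (subst2 a b F) =
      ∑ i ∈ Finset.range N, ∑ j ∈ Finset.range N,
        MvPowerSeries.coeff (Finsupp.single (0 : Fin 2) i + Finsupp.single 1 j) F *
          MvPowerSeries.coeff d (a ^ i * b ^ j) := by
  have h0 : MvPowerSeries.coeff d (subst2 a b F) =
      ∑ i ∈ Finset.range (d.sum (fun _ k => k) + 1),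
        ∑ j ∈ Finset.range (d.sum (fun _ k => k) + 1),
          MvPowerSeries.coeff (Finsupp.single (0 : Fin 2) i + Finsupp.single 1 j) F *
            MvPowerSeries.coeff d (a ^ i * b ^ j) := rfl
  rw [h0]
  have hsub : Finset.range (d.sum (fun _ k => k) + 1) ⊆ Finset.range N :=
    Finset.range_subset_range.2 (by omega)
  rw [Finset.sum_subset hsub]
  · refine Finset.sum_congr rfl fun i _ => ?_
    refine Finset.sum_subset hsub fun j _ hj => ?_
    have : d.sum (fun _ k => k) < i + j := by simp at hj; omega
    exact mul_eq_zero_of_right _ (coeff_mul_pow_eq_zero ha hb this)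
  · intro i _ hi
    refine Finset.sum_eq_zero fun j _ => ?_
    have : d.sum (fun _ k => k) < i + j := by simp at hi; omega
    exact mul_eq_zero_of_right _ (coeff_mul_pow_eq_zero ha hb this)

end Machinery
section Machinery2

variable {σ R S : Type*} [CommRing R] [CommRing S]

lemma fin2_eq (e : Fin 2 →₀ ℕ) :
    e = Finsupp.single (0 : Fin 2) (e 0) + Finsupp.single 1 (e 1) := by
  ext x
  fin_cases x <;> simp [Finsupp.single_apply]

lemma pair_apply0 (i j : ℕ) :
    (Finsupp.single (0 : Fin 2) i + Finsupp.single 1 j : Fin 2 →₀ ℕ) 0 = i := by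
  simp [Finsupp.single_apply]

lemma pair_apply1 (i j : ℕ) :
    (Finsupp.single (0 : Fin 2) i + Finsupp.single 1 j : Fin 2 →₀ ℕ) 1 = j := by
  simp [Finsupp.single_apply]

lemma pair_add (a b c d : ℕ) :
    (Finsupp.single (0:Fin 2) a + Finsupp.single 1 b) +
      (Finsupp.single (0:Fin 2) c + Finsupp.single 1 d) =
      Finsupp.single (0:Fin 2) (a+c) + Finsupp.single 1 (b+d) := by
  ext x; fin_cases x <;> simp [Finsupp.single_apply]

lemma pair_deg (i j : ℕ) :
    (Finsupp.single (0 : Fin 2) i + Finsupp.single 1 j).sum (fun _ k => k) = i + j := by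
  rw [deg_add]
  simp [Finsupp.sum_single_index]

lemma pair_eq_zero_iff (i j : ℕ) :
    Finsupp.single (0 : Fin 2) i + Finsupp.single 1 j = 0 ↔ i = 0 ∧ j = 0 := by
  constructor
  · intro h
    constructor
    · have := congrArg (fun d => d 0) h; simpa [pair_apply0] using this
    · have := congrArg (fun d => d 1) h; simpa [pair_apply1] using this
  · rintro ⟨rfl, rfl⟩; simp

/-- coefficient of a product of 2-variable power series at a "pair" monomial -/
lemma coeff_mul_fin2 (F G : MvPowerSeries (Fin 2) R) (i j : ℕ) :
    MvPowerSeries.coeff (Finsupp.single (0 : Fin 2) i + Finsupp.single 1 j) (F * G) =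
      ∑ q1 ∈ Finset.HasAntidiagonal.antidiagonal i, ∑ q2 ∈ Finset.HasAntidiagonal.antidiagonal j,
        MvPowerSeries.coeff (Finsupp.single (0 : Fin 2) q1.1 + Finsupp.single 1 q2.1) F *
          MvPowerSeries.coeff (Finsupp.single (0 : Fin 2) q1.2 + Finsupp.single 1 q2.2) G := by
  rw [MvPowerSeries.coeff_mul, ← Finset.sum_product']
  refine Finset.sum_nbij' (fun e => ((e.1 0, e.2 0), (e.1 1, e.2 1)))
    (fun q => (Finsupp.single (0 : Fin 2) q.1.1 + Finsupp.single 1 q.2.1,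
      Finsupp.single (0 : Fin 2) q.1.2 + Finsupp.single 1 q.2.2)) ?_ ?_ ?_ ?_ ?_
  · intro e he
    have hsum := Finset.HasAntidiagonal.mem_antidiagonal.1 he
    simp only [Finset.mem_product, Finset.HasAntidiagonal.mem_antidiagonal]
    constructor
    · have := congrArg (fun d => d 0) hsum
      simpa [pair_apply0] using this
    · have := congrArg (fun d => d 1) hsum
      simpa [pair_apply1] using this
  · intro q hq
    simp only [Finset.mem_product, Finset.HasAntidiagonal.mem_antidiagonal] at hq
    rw [Finset.HasAntidiagonal.mem_antidiagonal, pair_add, hq.1, hq.2]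
  · intro e _
    refine Prod.ext (fin2_eq e.1).symm (fin2_eq e.2).symm
  · intro q _
    simp [pair_apply0, pair_apply1]
  · intro e _
    rw [← fin2_eq e.1, ← fin2_eq e.2]

/-- Turning a sum over antidiagonals into a box sum, given vanishing beyond the diagonal. -/
lemma natbox {M : Type*} [AddCommMonoid M] (D : ℕ) (g : ℕ → ℕ → M)
    (hg : ∀ u v, D < u + v → g u v = 0) :
    ∑ n ∈ Finset.range (D + 1), ∑ q ∈ Finset.HasAntidiagonal.antidiagonal n, g q.1 q.2 =
      ∑ u ∈ Finset.range (D + 1), ∑ v ∈ Finset.range (D + 1), g u v := by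
  have step1 : ∀ n ∈ Finset.range (D + 1),
      ∑ q ∈ Finset.HasAntidiagonal.antidiagonal n, g q.1 q.2 =
      ∑ q ∈ Finset.range (D+1) ×ˢ Finset.range (D+1),
        if q.1 + q.2 = n then g q.1 q.2 else 0 := by
    intro n hn
    simp only [Finset.mem_range] at hn
    rw [← Finset.sum_filter]
    have hset : Finset.filter (fun q => q.1 + q.2 = n)
        (Finset.range (D+1) ×ˢ Finset.range (D+1)) = Finset.HasAntidiagonal.antidiagonal n := by
      ext q
      simp only [Finset.mem_filter, Finset.mem_product, Finset.HasAntidiagonal.mem_antidiagonal, Finset.mem_range]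
      omega
    rw [hset]
  rw [Finset.sum_congr rfl step1, Finset.sum_comm]
  conv_rhs => rw [← Finset.sum_product']
  refine Finset.sum_congr rfl fun q hq => ?_
  rw [Finset.sum_ite_eq (Finset.range (D+1)) (q.1 + q.2) (fun _ => g q.1 q.2)]
  simp only [Finset.mem_range]
  split
  · rfl
  · next h => exact (hg q.1 q.2 (by omega)).symm

end Machinery2
section Machinery3

variable {σ R S : Type*} [CommRing R] [CommRing S]

lemma pair_inj {i j i' j' : ℕ} :
    Finsupp.single (0 : Fin 2) i + Finsupp.single 1 j =
      Finsupp.single (0 : Fin 2) i' + Finsupp.single 1 j' ↔ i = i' ∧ j = j' := by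
  constructor
  · intro h
    constructor
    · have := congrArg (fun d : Fin 2 →₀ ℕ => d 0) h
      simpa [pair_apply0] using this
    · have := congrArg (fun d : Fin 2 →₀ ℕ => d 1) h
      simpa [pair_apply1] using this
  · rintro ⟨rfl, rfl⟩; rfl

lemma coeff_pair_X0 (i j : ℕ) :
    MvPowerSeries.coeff (Finsupp.single (0 : Fin 2) i + Finsupp.single 1 j)
      (MvPowerSeries.X 0 : MvPowerSeries (Fin 2) R) = if i = 1 ∧ j = 0 then 1 else 0 := by
  rw [MvPowerSeries.coeff_X]
  have : (Finsupp.single (0 : Fin 2) i + Finsupp.single 1 j = Finsupp.single 0 1) ↔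
      (i = 1 ∧ j = 0) := by
    have h1 : (Finsupp.single (0:Fin 2) 1 : Fin 2 →₀ ℕ) =
        Finsupp.single (0 : Fin 2) 1 + Finsupp.single 1 0 := by simp
    rw [h1, pair_inj]
  simp only [this]

lemma coeff_pair_X1 (i j : ℕ) :
    MvPowerSeries.coeff (Finsupp.single (0 : Fin 2) i + Finsupp.single 1 j)
      (MvPowerSeries.X 1 : MvPowerSeries (Fin 2) R) = if i = 0 ∧ j = 1 then 1 else 0 := by
  rw [MvPowerSeries.coeff_X]
  have : (Finsupp.single (0 : Fin 2) i + Finsupp.single 1 j = Finsupp.single 1 1) ↔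
      (i = 0 ∧ j = 1) := by
    have h1 : (Finsupp.single (1:Fin 2) 1 : Fin 2 →₀ ℕ) =
        Finsupp.single (0 : Fin 2) 0 + Finsupp.single 1 1 := by simp
    rw [h1, pair_inj]
  simp only [this]

variable {a b : MvPowerSeries σ R}

lemma subst2_add (a b : MvPowerSeries σ R) (F G : MvPowerSeries (Fin 2) R) :
    subst2 a b (F + G) = subst2 a b F + subst2 a b G := by
  ext d
  have hd : ∀ H : MvPowerSeries (Fin 2) R, MvPowerSeries.coeff d (subst2 a b H) =
      ∑ i ∈ Finset.range (d.sum (fun _ k => k) + 1),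
        ∑ j ∈ Finset.range (d.sum (fun _ k => k) + 1),
          MvPowerSeries.coeff (Finsupp.single (0 : Fin 2) i + Finsupp.single 1 j) H *
            MvPowerSeries.coeff d (a ^ i * b ^ j) := fun _ => rfl
  rw [map_add, hd, hd, hd, ← Finset.sum_add_distrib]
  refine Finset.sum_congr rfl fun i _ => ?_
  rw [← Finset.sum_add_distrib]
  refine Finset.sum_congr rfl fun j _ => ?_
  rw [map_add, add_mul]

lemma subst2_one (a b : MvPowerSeries σ R) : subst2 a b 1 = 1 := by
  ext d
  have hd : MvPowerSeries.coeff d (subst2 a b 1) =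
      ∑ i ∈ Finset.range (d.sum (fun _ k => k) + 1),
        ∑ j ∈ Finset.range (d.sum (fun _ k => k) + 1),
          MvPowerSeries.coeff (Finsupp.single (0 : Fin 2) i + Finsupp.single 1 j)
            (1 : MvPowerSeries (Fin 2) R) *
            MvPowerSeries.coeff d (a ^ i * b ^ j) := rfl
  rw [hd]
  rw [Finset.sum_eq_single 0]
  · rw [Finset.sum_eq_single 0]
    · simp [MvPowerSeries.coeff_one]
    · intro j _ hj
      rw [MvPowerSeries.coeff_one, if_neg, zero_mul]
      rw [pair_eq_zero_iff]
      tauto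
    · intro h; exact absurd (Finset.mem_range.2 (by omega)) h
  · intro i _ hi
    refine Finset.sum_eq_zero fun j _ => ?_
    rw [MvPowerSeries.coeff_one, if_neg, zero_mul]
    rw [pair_eq_zero_iff]
    tauto
  · intro h; exact absurd (Finset.mem_range.2 (by omega)) h

lemma subst2_X0 (ha : constantCoeff a = 0) (hb : constantCoeff b = 0) :
    subst2 a b (MvPowerSeries.X 0) = a := by
  ext d
  rw [coeff_subst2 ha hb _ d (N := d.sum (fun _ k => k) + 2) (by omega)]
  rw [Finset.sum_eq_single 1]
  · rw [Finset.sum_eq_single 0]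
    · rw [coeff_pair_X0]
      simp
    · intro j _ hj
      rw [coeff_pair_X0, if_neg (by tauto), zero_mul]
    · intro h; exact absurd (Finset.mem_range.2 (by omega)) h
  · intro i _ hi
    refine Finset.sum_eq_zero fun j _ => ?_
    rw [coeff_pair_X0, if_neg (by tauto), zero_mul]
  · intro h; exact absurd (Finset.mem_range.2 (by omega)) h

lemma subst2_X1 (ha : constantCoeff a = 0) (hb : constantCoeff b = 0) :
    subst2 a b (MvPowerSeries.X 1) = b := by
  ext d
  rw [coeff_subst2 ha hb _ d (N := d.sum (fun _ k => k) + 2) (by omega)]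
  rw [Finset.sum_eq_single 0]
  · rw [Finset.sum_eq_single 1]
    · rw [coeff_pair_X1]
      simp
    · intro j _ hj
      rw [coeff_pair_X1, if_neg (by tauto), zero_mul]
    · intro h; exact absurd (Finset.mem_range.2 (by omega)) h
  · intro i _ hi
    refine Finset.sum_eq_zero fun j _ => ?_
    rw [coeff_pair_X1, if_neg (by tauto), zero_mul]
  · intro h; exact absurd (Finset.mem_range.2 (by omega)) h

lemma subst2_constantCoeff (a b : MvPowerSeries σ R) (F : MvPowerSeries (Fin 2) R) :
    constantCoeff (subst2 a b F) = MvPowerSeries.constantCoeff F := by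
  rw [← MvPowerSeries.coeff_zero_eq_constantCoeff, ← MvPowerSeries.coeff_zero_eq_constantCoeff]
  have hd : MvPowerSeries.coeff (0 : σ →₀ ℕ) (subst2 a b F) =
      ∑ i ∈ Finset.range ((0 : σ →₀ ℕ).sum (fun _ k => k) + 1),
        ∑ j ∈ Finset.range ((0 : σ →₀ ℕ).sum (fun _ k => k) + 1),
          MvPowerSeries.coeff (Finsupp.single (0 : Fin 2) i + Finsupp.single 1 j) F *
            MvPowerSeries.coeff (0 : σ →₀ ℕ) (a ^ i * b ^ j) := rfl
  rw [hd]
  have h0 : (0 : σ →₀ ℕ).sum (fun _ k => k) = 0 := Finsupp.sum_zero_index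
  rw [h0]
  simp [MvPowerSeries.coeff_one]

lemma subst2_map (φ : R →+* S) (a b : MvPowerSeries σ R) (F : MvPowerSeries (Fin 2) R) :
    MvPowerSeries.map φ (subst2 a b F) =
      subst2 (MvPowerSeries.map φ a) (MvPowerSeries.map φ b)
        (MvPowerSeries.map φ F) := by
  ext d
  rw [MvPowerSeries.coeff_map]
  have h1 : MvPowerSeries.coeff d (subst2 a b F) =
      ∑ i ∈ Finset.range (d.sum (fun _ k => k) + 1),
        ∑ j ∈ Finset.range (d.sum (fun _ k => k) + 1),
          MvPowerSeries.coeff (Finsupp.single (0 : Fin 2) i + Finsupp.single 1 j) F *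
            MvPowerSeries.coeff d (a ^ i * b ^ j) := rfl
  have h2 : MvPowerSeries.coeff d
      (subst2 (MvPowerSeries.map φ a) (MvPowerSeries.map φ b)
        (MvPowerSeries.map φ F)) =
      ∑ i ∈ Finset.range (d.sum (fun _ k => k) + 1),
        ∑ j ∈ Finset.range (d.sum (fun _ k => k) + 1),
          MvPowerSeries.coeff (Finsupp.single (0 : Fin 2) i + Finsupp.single 1 j)
            (MvPowerSeries.map φ F) *
            MvPowerSeries.coeff d
              ((MvPowerSeries.map φ a) ^ i * (MvPowerSeries.map φ b) ^ j) := rfl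
  rw [h1, h2, map_sum]
  refine Finset.sum_congr rfl fun i _ => ?_
  rw [map_sum]
  refine Finset.sum_congr rfl fun j _ => ?_
  have hc : (MvPowerSeries.coeff d)
      ((MvPowerSeries.map φ a) ^ i * (MvPowerSeries.map φ b) ^ j) =
      φ ((MvPowerSeries.coeff d) (a ^ i * b ^ j)) := by
    rw [← map_pow, ← map_pow, ← map_mul, MvPowerSeries.coeff_map]
  rw [hc, map_mul, MvPowerSeries.coeff_map]

end Machinery3
section Machinery4

variable {σ R : Type*} [CommRing R] {a b : MvPowerSeries σ R}

lemma subst2_mul (ha : constantCoeff a = 0) (hb : constantCoeff b = 0)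
    (F G : MvPowerSeries (Fin 2) R) :
    subst2 a b (F * G) = subst2 a b F * subst2 a b G := by
  ext d
  obtain ⟨D, hD⟩ : ∃ D, d.sum (fun _ k => k) = D := ⟨_, rfl⟩
  have hDlt : d.sum (fun _ k => k) < D + 1 := by omega
  have key : ∀ w x y z : ℕ, D < (w + x) + (y + z) →
      MvPowerSeries.coeff d (a ^ (w + x) * b ^ (y + z)) = 0 := fun w x y z h =>
    coeff_mul_pow_eq_zero ha hb (by omega)
  have hL : MvPowerSeries.coeff d (subst2 a b (F * G)) =
      ∑ u ∈ Finset.range (D+1), ∑ v ∈ Finset.range (D+1),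
        ∑ u' ∈ Finset.range (D+1), ∑ v' ∈ Finset.range (D+1),
        MvPowerSeries.coeff (Finsupp.single (0 : Fin 2) u + Finsupp.single 1 u') F *
          MvPowerSeries.coeff (Finsupp.single (0 : Fin 2) v + Finsupp.single 1 v') G *
          MvPowerSeries.coeff d (a ^ (u + v) * b ^ (u' + v')) := by
    calc MvPowerSeries.coeff d (subst2 a b (F * G))
        = ∑ i ∈ Finset.range (D+1), ∑ j ∈ Finset.range (D+1),
            MvPowerSeries.coeff (Finsupp.single (0 : Fin 2) i + Finsupp.single 1 j) (F * G) *
              MvPowerSeries.coeff d (a ^ i * b ^ j) := coeff_subst2 ha hb (F * G) d hDlt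
      _ = ∑ i ∈ Finset.range (D+1), ∑ j ∈ Finset.range (D+1),
            ∑ q1 ∈ Finset.HasAntidiagonal.antidiagonal i, ∑ q2 ∈ Finset.HasAntidiagonal.antidiagonal j,
            MvPowerSeries.coeff (Finsupp.single (0 : Fin 2) q1.1 + Finsupp.single 1 q2.1) F *
              MvPowerSeries.coeff (Finsupp.single (0 : Fin 2) q1.2 + Finsupp.single 1 q2.2) G *
              MvPowerSeries.coeff d (a ^ (q1.1 + q1.2) * b ^ (q2.1 + q2.2)) := by
          refine Finset.sum_congr rfl fun i _ => Finset.sum_congr rfl fun j _ => ?_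
          rw [coeff_mul_fin2, Finset.sum_mul]
          refine Finset.sum_congr rfl fun q1 hq1 => ?_
          rw [Finset.sum_mul]
          refine Finset.sum_congr rfl fun q2 hq2 => ?_
          rw [Finset.HasAntidiagonal.mem_antidiagonal] at hq1 hq2
          rw [← hq1, ← hq2]
      _ = ∑ i ∈ Finset.range (D+1), ∑ q1 ∈ Finset.HasAntidiagonal.antidiagonal i,
            ∑ j ∈ Finset.range (D+1), ∑ q2 ∈ Finset.HasAntidiagonal.antidiagonal j,
            MvPowerSeries.coeff (Finsupp.single (0 : Fin 2) q1.1 + Finsupp.single 1 q2.1) F *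
              MvPowerSeries.coeff (Finsupp.single (0 : Fin 2) q1.2 + Finsupp.single 1 q2.2) G *
              MvPowerSeries.coeff d (a ^ (q1.1 + q1.2) * b ^ (q2.1 + q2.2)) :=
          Finset.sum_congr rfl fun i _ => Finset.sum_comm
      _ = ∑ u ∈ Finset.range (D+1), ∑ v ∈ Finset.range (D+1),
            ∑ j ∈ Finset.range (D+1), ∑ q2 ∈ Finset.HasAntidiagonal.antidiagonal j,
            MvPowerSeries.coeff (Finsupp.single (0 : Fin 2) u + Finsupp.single 1 q2.1) F *
              MvPowerSeries.coeff (Finsupp.single (0 : Fin 2) v + Finsupp.single 1 q2.2) G *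
              MvPowerSeries.coeff d (a ^ (u + v) * b ^ (q2.1 + q2.2)) := by
          refine natbox D (fun u v => ∑ j ∈ Finset.range (D+1), ∑ q2 ∈ Finset.HasAntidiagonal.antidiagonal j,
            MvPowerSeries.coeff (Finsupp.single (0 : Fin 2) u + Finsupp.single 1 q2.1) F *
              MvPowerSeries.coeff (Finsupp.single (0 : Fin 2) v + Finsupp.single 1 q2.2) G *
              MvPowerSeries.coeff d (a ^ (u + v) * b ^ (q2.1 + q2.2)))
            fun u v huv => ?_
          refine Finset.sum_eq_zero fun j _ => Finset.sum_eq_zero fun q2 _ => ?_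
          rw [key u v q2.1 q2.2 (by omega), mul_zero]
      _ = ∑ u ∈ Finset.range (D+1), ∑ v ∈ Finset.range (D+1),
            ∑ u' ∈ Finset.range (D+1), ∑ v' ∈ Finset.range (D+1),
            MvPowerSeries.coeff (Finsupp.single (0 : Fin 2) u + Finsupp.single 1 u') F *
              MvPowerSeries.coeff (Finsupp.single (0 : Fin 2) v + Finsupp.single 1 v') G *
              MvPowerSeries.coeff d (a ^ (u + v) * b ^ (u' + v')) := by
          refine Finset.sum_congr rfl fun u _ => Finset.sum_congr rfl fun v _ => ?_
          refine natbox D (fun u' v' =>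
            MvPowerSeries.coeff (Finsupp.single (0 : Fin 2) u + Finsupp.single 1 u') F *
              MvPowerSeries.coeff (Finsupp.single (0 : Fin 2) v + Finsupp.single 1 v') G *
              MvPowerSeries.coeff d (a ^ (u + v) * b ^ (u' + v')))
            fun u' v' huv => ?_
          rw [key u v u' v' (by omega), mul_zero]
  have hR : MvPowerSeries.coeff d (subst2 a b F * subst2 a b G) =
      ∑ u ∈ Finset.range (D+1), ∑ v ∈ Finset.range (D+1),
        ∑ u' ∈ Finset.range (D+1), ∑ v' ∈ Finset.range (D+1),
        MvPowerSeries.coeff (Finsupp.single (0 : Fin 2) u + Finsupp.single 1 u') F *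
          MvPowerSeries.coeff (Finsupp.single (0 : Fin 2) v + Finsupp.single 1 v') G *
          MvPowerSeries.coeff d (a ^ (u + v) * b ^ (u' + v')) := by
    calc MvPowerSeries.coeff d (subst2 a b F * subst2 a b G)
        = ∑ q ∈ Finset.HasAntidiagonal.antidiagonal d,
            MvPowerSeries.coeff q.1 (subst2 a b F) *
              MvPowerSeries.coeff q.2 (subst2 a b G) := MvPowerSeries.coeff_mul _ _ _
      _ = ∑ q ∈ Finset.HasAntidiagonal.antidiagonal d,
            ∑ z1 ∈ Finset.range (D+1) ×ˢ Finset.range (D+1),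
            ∑ z2 ∈ Finset.range (D+1) ×ˢ Finset.range (D+1),
              (MvPowerSeries.coeff (Finsupp.single (0 : Fin 2) z1.1 + Finsupp.single 1 z1.2) F *
                 MvPowerSeries.coeff q.1 (a ^ z1.1 * b ^ z1.2)) *
              (MvPowerSeries.coeff (Finsupp.single (0 : Fin 2) z2.1 + Finsupp.single 1 z2.2) G *
                 MvPowerSeries.coeff q.2 (a ^ z2.1 * b ^ z2.2)) := by
          refine Finset.sum_congr rfl fun q hq => ?_
          have hsum := Finset.HasAntidiagonal.mem_antidiagonal.1 hq
          have hdeg : q.1.sum (fun _ k => k) + q.2.sum (fun _ k => k) = D := by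
            rw [← deg_add, hsum, hD]
          rw [coeff_subst2 ha hb F q.1 (N := D + 1) (by omega),
            coeff_subst2 ha hb G q.2 (N := D + 1) (by omega),
            ← Finset.sum_product', ← Finset.sum_product', Finset.sum_mul_sum]
      _ = ∑ z1 ∈ Finset.range (D+1) ×ˢ Finset.range (D+1),
          ∑ z2 ∈ Finset.range (D+1) ×ˢ Finset.range (D+1),
            MvPowerSeries.coeff (Finsupp.single (0 : Fin 2) z1.1 + Finsupp.single 1 z1.2) F *
              MvPowerSeries.coeff (Finsupp.single (0 : Fin 2) z2.1 + Finsupp.single 1 z2.2) G *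
              MvPowerSeries.coeff d ((a ^ z1.1 * b ^ z1.2) * (a ^ z2.1 * b ^ z2.2)) := by
          rw [Finset.sum_comm]
          refine Finset.sum_congr rfl fun z1 _ => ?_
          rw [Finset.sum_comm]
          refine Finset.sum_congr rfl fun z2 _ => ?_
          rw [MvPowerSeries.coeff_mul, Finset.mul_sum]
          refine Finset.sum_congr rfl fun q _ => ?_
          rw [mul_mul_mul_comm]
      _ = ∑ u ∈ Finset.range (D+1), ∑ u' ∈ Finset.range (D+1),
          ∑ v ∈ Finset.range (D+1), ∑ v' ∈ Finset.range (D+1),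
            MvPowerSeries.coeff (Finsupp.single (0 : Fin 2) u + Finsupp.single 1 u') F *
              MvPowerSeries.coeff (Finsupp.single (0 : Fin 2) v + Finsupp.single 1 v') G *
              MvPowerSeries.coeff d ((a ^ u * b ^ u') * (a ^ v * b ^ v')) := by
          simp only [Finset.sum_product]
      _ = ∑ u ∈ Finset.range (D+1), ∑ v ∈ Finset.range (D+1),
          ∑ u' ∈ Finset.range (D+1), ∑ v' ∈ Finset.range (D+1),
            MvPowerSeries.coeff (Finsupp.single (0 : Fin 2) u + Finsupp.single 1 u') F *
              MvPowerSeries.coeff (Finsupp.single (0 : Fin 2) v + Finsupp.single 1 v') G *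
              MvPowerSeries.coeff d (a ^ (u + v) * b ^ (u' + v')) := by
          refine Finset.sum_congr rfl fun u _ => ?_
          rw [Finset.sum_comm]
          refine Finset.sum_congr rfl fun v _ => Finset.sum_congr rfl fun u' _ =>
            Finset.sum_congr rfl fun v' _ => ?_
          have h : (a ^ u * b ^ u') * (a ^ v * b ^ v') = a ^ (u + v) * b ^ (u' + v') := by
            rw [pow_add, pow_add]; ring
          rw [h]
  rw [hL, hR]

lemma subst2_pow (ha : constantCoeff a = 0) (hb : constantCoeff b = 0)
    (F : MvPowerSeries (Fin 2) R) (n : ℕ) :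
    subst2 a b (F ^ n) = (subst2 a b F) ^ n := by
  induction n with
  | zero => simpa using subst2_one a b
  | succ n ih => rw [pow_succ, pow_succ, subst2_mul ha hb, ih]

end Machinery4
section Machinery5

variable {σ R S : Type*} [CommRing R] [CommRing S] {a b : MvPowerSeries σ R}

lemma substPS_map (φ : R →+* S) (g : MvPowerSeries σ R) (f : PowerSeries R) :
    MvPowerSeries.map φ (substPS g f) =
      substPS (MvPowerSeries.map φ g) (PowerSeries.map φ f) := by
  ext d
  rw [MvPowerSeries.coeff_map]
  have h1 : MvPowerSeries.coeff d (substPS g f) =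
      ∑ n ∈ Finset.range (d.sum (fun _ k => k) + 1),
        PowerSeries.coeff n f * MvPowerSeries.coeff d (g ^ n) := rfl
  have h2 : MvPowerSeries.coeff d (substPS (MvPowerSeries.map φ g) (PowerSeries.map φ f)) =
      ∑ n ∈ Finset.range (d.sum (fun _ k => k) + 1),
        PowerSeries.coeff n (PowerSeries.map φ f) *
          MvPowerSeries.coeff d ((MvPowerSeries.map φ g) ^ n) := rfl
  rw [h1, h2, map_sum]
  refine Finset.sum_congr rfl fun n _ => ?_
  have hc : MvPowerSeries.coeff d ((MvPowerSeries.map φ g) ^ n) =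
      φ (MvPowerSeries.coeff d (g ^ n)) := by
    rw [← map_pow, MvPowerSeries.coeff_map]
  rw [hc, map_mul, PowerSeries.coeff_map]

lemma substPS_subst2 (ha : constantCoeff a = 0) (hb : constantCoeff b = 0)
    {F : MvPowerSeries (Fin 2) R} (hF : MvPowerSeries.constantCoeff F = 0)
    (f : PowerSeries R) :
    substPS (subst2 a b F) f = subst2 a b (substPS F f) := by
  ext d
  obtain ⟨D, hD⟩ : ∃ D, d.sum (fun _ k => k) = D := ⟨_, rfl⟩
  have hDlt : d.sum (fun _ k => k) < D + 1 := by omega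
  have h0 : constantCoeff (subst2 a b F) = 0 := by
    rw [subst2_constantCoeff, hF]
  have hLL : MvPowerSeries.coeff d (substPS (subst2 a b F) f) =
      ∑ i ∈ Finset.range (D+1), ∑ j ∈ Finset.range (D+1),
        (∑ n ∈ Finset.range (D+1), PowerSeries.coeff n f *
          MvPowerSeries.coeff (Finsupp.single (0 : Fin 2) i + Finsupp.single 1 j) (F ^ n)) *
          MvPowerSeries.coeff d (a ^ i * b ^ j) := by
    calc MvPowerSeries.coeff d (substPS (subst2 a b F) f)
        = ∑ n ∈ Finset.range (D+1), PowerSeries.coeff n f *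
            MvPowerSeries.coeff d ((subst2 a b F) ^ n) := coeff_substPS h0 f d hDlt
      _ = ∑ n ∈ Finset.range (D+1), ∑ i ∈ Finset.range (D+1), ∑ j ∈ Finset.range (D+1),
            PowerSeries.coeff n f *
              (MvPowerSeries.coeff (Finsupp.single (0 : Fin 2) i + Finsupp.single 1 j) (F ^ n) *
                MvPowerSeries.coeff d (a ^ i * b ^ j)) := by
          refine Finset.sum_congr rfl fun n _ => ?_
          rw [← subst2_pow ha hb, coeff_subst2 ha hb (F ^ n) d hDlt]
          simp only [Finset.mul_sum]
      _ = ∑ i ∈ Finset.range (D+1), ∑ n ∈ Finset.range (D+1), ∑ j ∈ Finset.range (D+1),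
            PowerSeries.coeff n f *
              (MvPowerSeries.coeff (Finsupp.single (0 : Fin 2) i + Finsupp.single 1 j) (F ^ n) *
                MvPowerSeries.coeff d (a ^ i * b ^ j)) := Finset.sum_comm
      _ = ∑ i ∈ Finset.range (D+1), ∑ j ∈ Finset.range (D+1), ∑ n ∈ Finset.range (D+1),
            PowerSeries.coeff n f *
              (MvPowerSeries.coeff (Finsupp.single (0 : Fin 2) i + Finsupp.single 1 j) (F ^ n) *
                MvPowerSeries.coeff d (a ^ i * b ^ j)) :=
          Finset.sum_congr rfl fun i _ => Finset.sum_comm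
      _ = ∑ i ∈ Finset.range (D+1), ∑ j ∈ Finset.range (D+1),
            (∑ n ∈ Finset.range (D+1), PowerSeries.coeff n f *
              MvPowerSeries.coeff (Finsupp.single (0 : Fin 2) i + Finsupp.single 1 j) (F ^ n)) *
              MvPowerSeries.coeff d (a ^ i * b ^ j) := by
          refine Finset.sum_congr rfl fun i _ => Finset.sum_congr rfl fun j _ => ?_
          rw [Finset.sum_mul]
          exact Finset.sum_congr rfl fun n _ => (mul_assoc _ _ _).symm
  rw [hLL, coeff_subst2 ha hb (substPS F f) d hDlt]
  refine Finset.sum_congr rfl fun i hi => Finset.sum_congr rfl fun j hj => ?_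
  by_cases hij : i + j ≤ D
  · rw [coeff_substPS hF f _ (N := D + 1) (by rw [pair_deg]; omega)]
  · have hc : MvPowerSeries.coeff d (a ^ i * b ^ j) = 0 :=
      coeff_mul_pow_eq_zero ha hb (by omega)
    rw [hc, mul_zero, mul_zero]

end Machinery5
section Machinery6

variable {R : Type*} [CommRing R]

lemma geom_coeff_zero {c e : PowerSeries R} (hc : PowerSeries.constantCoeff c = 0)
    (he : PowerSeries.constantCoeff e = 0) {m : ℕ} (hm : 2 ≤ m) {n : ℕ}
    (hlow : ∀ u < n, PowerSeries.coeff u (c - e) = 0) :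
    PowerSeries.coeff n (c ^ m - e ^ m) = 0 := by
  rw [← geom_sum₂_mul c e m, PowerSeries.coeff_mul]
  refine Finset.sum_eq_zero fun q hq => ?_
  have hsum := Finset.HasAntidiagonal.mem_antidiagonal.1 hq
  rcases lt_or_ge q.2 n with h2 | h2
  · rw [hlow q.2 h2, mul_zero]
  · have hq1 : q.1 = 0 := by omega
    have hconst : PowerSeries.coeff 0 (∑ i ∈ Finset.range m, c ^ i * e ^ (m - 1 - i)) = 0 := by
      rw [map_sum]
      refine Finset.sum_eq_zero fun i _ => ?_
      rcases Nat.eq_zero_or_pos i with rfl | hi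
      · have : m - 1 - 0 ≠ 0 := by omega
        rw [PowerSeries.coeff_zero_eq_constantCoeff, map_mul, map_pow, map_pow, he,
          zero_pow this, mul_zero]
      · rw [PowerSeries.coeff_zero_eq_constantCoeff, map_mul, map_pow, hc,
          zero_pow (by omega), zero_mul]
    rw [hq1, hconst, zero_mul]

lemma dvd_coeff_mul {r : R} {u : PowerSeries R} (hu : ∀ k, r ∣ PowerSeries.coeff k u)
    (v : PowerSeries R) (k : ℕ) : r ∣ PowerSeries.coeff k (u * v) := by
  rw [PowerSeries.coeff_mul]
  exact Finset.dvd_sum fun q _ => Dvd.dvd.mul_right (hu q.1) _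

lemma dvd_coeff_pow {r : R} {w : PowerSeries R} {c : ℕ}
    (hw : ∀ k, r ^ c ∣ PowerSeries.coeff k w) :
    ∀ t, 1 ≤ t → ∀ k, r ^ (c * t) ∣ PowerSeries.coeff k (w ^ t) := by
  intro t
  induction t with
  | zero => omega
  | succ t ih =>
    intro _ k
    rcases Nat.eq_zero_or_pos t with rfl | ht
    · simpa [pow_one] using hw k
    · rw [pow_succ, PowerSeries.coeff_mul, Nat.mul_succ, pow_add]
      refine Finset.dvd_sum fun q _ => mul_dvd_mul (ih ht q.1) (hw q.2)

variable (p : ℕ) [hp : Fact p.Prime]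

lemma frob_step {u w : PowerSeries ℤ_[p]} {c : ℕ} (hc : 1 ≤ c)
    (hw : ∀ k, (p : ℤ_[p]) ^ c ∣ PowerSeries.coeff k w) (k : ℕ) :
    (p : ℤ_[p]) ^ (c + 1) ∣ PowerSeries.coeff k ((u + w) ^ p - u ^ p) := by
  have hp2 := hp.out.two_le
  have hexp : (u + w) ^ p - u ^ p =
      ∑ t ∈ Finset.range p, u ^ t * w ^ (p - t) * (Nat.choose p t : PowerSeries ℤ_[p]) := by
    rw [add_pow, Finset.sum_range_succ]
    simp [Nat.choose_self]
  rw [hexp, map_sum]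
  refine Finset.dvd_sum fun t htm => ?_
  rw [Finset.mem_range] at htm
  have hC : (Nat.choose p t : PowerSeries ℤ_[p]) =
      PowerSeries.C ((Nat.choose p t : ℤ_[p])) := by
    rw [map_natCast]
  rw [hC, PowerSeries.coeff_mul_C]
  have hcomm : u ^ t * w ^ (p - t) = w ^ (p - t) * u ^ t := mul_comm _ _
  rw [hcomm]
  have hdvd1 : (p : ℤ_[p]) ^ (c * (p - t)) ∣
      PowerSeries.coeff k (w ^ (p - t) * u ^ t) :=
    dvd_coeff_mul (dvd_coeff_pow hw (p - t) (by omega)) _ k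
  rcases Nat.eq_zero_or_pos t with rfl | ht
  · have hle : c + 1 ≤ c * (p - 0) :=
      calc c + 1 ≤ c * 2 := by omega
      _ ≤ c * (p - 0) := Nat.mul_le_mul_left c (by omega)
    exact Dvd.dvd.mul_right (dvd_trans (pow_dvd_pow _ hle) hdvd1) _
  · have hchoose : (p : ℤ_[p]) ∣ (Nat.choose p t : ℤ_[p]) :=
      Nat.cast_dvd_cast (Nat.Prime.dvd_choose_self hp.out (by omega) htm)
    have hle : c ≤ c * (p - t) := Nat.le_mul_of_pos_right c (by omega)
    rw [pow_succ]
    exact mul_dvd_mul (dvd_trans (pow_dvd_pow _ hle) hdvd1) hchoose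

lemma pow_div_step {b' b : PowerSeries ℤ_[p]}
    (h : ∀ k, (p : ℤ_[p]) ∣ PowerSeries.coeff k (b' - b)) :
    ∀ j k, (p : ℤ_[p]) ^ (j + 1) ∣ PowerSeries.coeff k (b' ^ p ^ j - b ^ p ^ j) := by
  intro j
  induction j with
  | zero => intro k; simpa using h k
  | succ j ih =>
    intro k
    have hrw : b' ^ p ^ (j + 1) - b ^ p ^ (j + 1) =
        (b ^ p ^ j + (b' ^ p ^ j - b ^ p ^ j)) ^ p - (b ^ p ^ j) ^ p := by
      rw [add_sub_cancel, ← pow_mul, ← pow_mul, ← pow_succ]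
    rw [hrw]
    exact frob_step p (by omega) ih k

lemma key_estimate {a b : PowerSeries ℤ_[p]}
    (ha0 : PowerSeries.constantCoeff a = 0)
    (hb0 : PowerSeries.constantCoeff b = 0) {n : ℕ}
    (IH : ∀ u < n, (p : ℤ_[p]) ∣ PowerSeries.coeff u (a - b)) {j : ℕ} (hj : 1 ≤ j) :
    (p : ℤ_[p]) ^ (j + 1) ∣ PowerSeries.coeff n (a ^ p ^ j - b ^ p ^ j) := by
  have hp2 := hp.out.two_le
  set e : PowerSeries ℤ_[p] :=
    PowerSeries.mk (fun u => if u < n then PowerSeries.coeff u (a - b) else 0) with he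
  set b' : PowerSeries ℤ_[p] := b + e with hb'
  have h1 : ∀ k, (p : ℤ_[p]) ∣ PowerSeries.coeff k (b' - b) := by
    intro k
    rw [hb', add_sub_cancel_left, he, PowerSeries.coeff_mk]
    split
    · exact IH k (by assumption)
    · exact dvd_zero _
  have h2 : ∀ u < n, PowerSeries.coeff u (a - b') = 0 := by
    intro u hu
    have : a - b' = (a - b) - e := by rw [hb']; ring
    rw [this, map_sub, he, PowerSeries.coeff_mk, if_pos hu, sub_self]
  have h3 : PowerSeries.constantCoeff b' = 0 := by
    rw [hb', map_add, hb0, zero_add, ← PowerSeries.coeff_zero_eq_constantCoeff, he,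
      PowerSeries.coeff_mk]
    split
    · rw [map_sub, PowerSeries.coeff_zero_eq_constantCoeff]
      simp [ha0, hb0]
    · rfl
  have hm2 : 2 ≤ p ^ j := by
    calc 2 ≤ p := hp2
    _ = p ^ 1 := (pow_one p).symm
    _ ≤ p ^ j := Nat.pow_le_pow_right (by omega) hj
  have h4 : PowerSeries.coeff n (a ^ p ^ j - b' ^ p ^ j) = 0 :=
    geom_coeff_zero ha0 h3 hm2 h2
  have h5 := pow_div_step p h1 j n
  have hsplit : a ^ p ^ j - b ^ p ^ j = (a ^ p ^ j - b' ^ p ^ j) + (b' ^ p ^ j - b ^ p ^ j) := by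
    ring
  rw [hsplit, map_add, h4, zero_add]
  exact h5

end Machinery6
section Machinery7

variable {R S : Type*} [CommRing R] [CommRing S]

lemma psX_eq : (PowerSeries.X : PowerSeries R) = MvPowerSeries.X () := rfl

lemma psCoeff_eq (n : ℕ) (f : PowerSeries R) :
    PowerSeries.coeff n f = MvPowerSeries.coeff (Finsupp.single () n) f := rfl

lemma psConst_eq (f : PowerSeries R) :
    PowerSeries.constantCoeff f = MvPowerSeries.constantCoeff f := rfl

lemma unit_deg (n : ℕ) : (Finsupp.single () n).sum (fun _ k => k) = n :=
  Finsupp.sum_single_index rfl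

/-- generalized `kSeries` over any commutative ring -/
noncomputable def kSZ (F : MvPowerSeries (Fin 2) R) : ℕ → PowerSeries R
  | 0 => 0
  | 1 => PowerSeries.X
  | (k + 2) => subst2 (kSZ F (k + 1)) PowerSeries.X F

lemma kSeries_eq_kSZ {p : ℕ} (F : MvPowerSeries (Fin 2) (ZMod p)) :
    ∀ k, kSeries F k = kSZ F k
  | 0 => rfl
  | 1 => rfl
  | (k + 2) => by
    show subst2 (kSeries F (k + 1)) PowerSeries.X F = subst2 (kSZ F (k + 1)) PowerSeries.X F
    rw [kSeries_eq_kSZ F (k + 1)]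

lemma kSZ_constantCoeff {F : MvPowerSeries (Fin 2) R}
    (hF : MvPowerSeries.constantCoeff F = 0) :
    ∀ k, PowerSeries.constantCoeff (kSZ F k) = 0
  | 0 => map_zero _
  | 1 => PowerSeries.constantCoeff_X
  | (k + 2) => by
    show PowerSeries.constantCoeff (subst2 (kSZ F (k + 1)) PowerSeries.X F) = 0
    rw [psConst_eq, subst2_constantCoeff, hF]

lemma kSZ_map (φ : R →+* S) (F : MvPowerSeries (Fin 2) R) :
    ∀ k, MvPowerSeries.map φ (kSZ F k) = kSZ (MvPowerSeries.map φ F) k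
  | 0 => map_zero _
  | 1 => by
    show MvPowerSeries.map φ PowerSeries.X = PowerSeries.X
    rw [psX_eq, MvPowerSeries.map_X, psX_eq]
  | (k + 2) => by
    show MvPowerSeries.map φ (subst2 (kSZ F (k + 1)) PowerSeries.X F) =
      subst2 (kSZ (MvPowerSeries.map φ F) (k + 1)) PowerSeries.X
        (MvPowerSeries.map φ F)
    rw [subst2_map, kSZ_map φ F (k + 1), psX_eq, MvPowerSeries.map_X]
    rfl

end Machinery7

section Machinery8

variable (p s : ℕ) [hp : Fact p.Prime] (hs : 1 ≤ s)

lemma hondaLog_coeff_pow (hs : 1 ≤ s) (i : ℕ) :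
    PowerSeries.coeff (p ^ (s * i)) (hondaLog p s) = (p : ℚ_[p]) ^ (-(i : ℤ)) := by
  rw [hondaLog, PowerSeries.coeff_mk]
  have hex : ∃ j, p ^ (s * i) = p ^ (s * j) := ⟨i, rfl⟩
  rw [dif_pos hex]
  have hfind : Nat.find hex = i := by
    rw [Nat.find_eq_iff]
    refine ⟨rfl, fun j hj hj' => ?_⟩
    have hinj := Nat.pow_right_injective hp.out.two_le hj'
    have : i = j := Nat.eq_of_mul_eq_mul_left (by omega : 0 < s) hinj
    omega
  rw [hfind]

lemma hondaLog_coeff_zero {n : ℕ} (hn : ¬∃ i, n = p ^ (s * i)) :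
    PowerSeries.coeff n (hondaLog p s) = 0 := by
  rw [hondaLog, PowerSeries.coeff_mk, dif_neg hn]

lemma hondaLog_coeff_one (hs : 1 ≤ s) : PowerSeries.coeff 1 (hondaLog p s) = 1 := by
  have := hondaLog_coeff_pow p s hs 0
  simpa using this

end Machinery8
section Machinery9

variable {R : Type*} [CommRing R]

lemma coeff_substPS_X (f : PowerSeries R) (n : ℕ) :
    MvPowerSeries.coeff (Finsupp.single () n)
      (substPS (MvPowerSeries.X () : MvPowerSeries Unit R) f) = PowerSeries.coeff n f := by
  rw [coeff_substPS (MvPowerSeries.constantCoeff_X ()) f (Finsupp.single () n)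
    (N := n + 1) (by rw [unit_deg]; omega)]
  rw [Finset.sum_eq_single n]
  · rw [MvPowerSeries.coeff_X_pow, if_pos rfl, mul_one]
  · intro m _ hm
    rw [MvPowerSeries.coeff_X_pow, if_neg, mul_zero]
    intro hcon
    exact hm ((Finsupp.single_injective ()) hcon).symm
  · intro h; exact absurd (Finset.mem_range.2 (by omega)) h

lemma coeff_Xq_pow (q m n : ℕ) :
    MvPowerSeries.coeff (Finsupp.single () n)
      (((MvPowerSeries.X () : MvPowerSeries Unit R) ^ q) ^ m) =
      if n = q * m then 1 else 0 := by
  rw [← pow_mul, MvPowerSeries.coeff_X_pow]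
  by_cases h : n = q * m
  · rw [if_pos (by rw [h]), if_pos h]
  · rw [if_neg, if_neg h]
    intro hcon
    exact h ((Finsupp.single_injective ()) hcon)

end Machinery9

section Machinery10

variable (p s : ℕ) [hp : Fact p.Prime]

lemma pl_identity (hs : 1 ≤ s) (n : ℕ) :
    (p : ℚ_[p]) * PowerSeries.coeff n (hondaLog p s) =
      (if n = 1 then (p : ℚ_[p]) else 0) +
        ∑ m ∈ Finset.range (n + 1), PowerSeries.coeff m (hondaLog p s) *
          MvPowerSeries.coeff (Finsupp.single () n)
            (((MvPowerSeries.X () : MvPowerSeries Unit ℚ_[p]) ^ (p ^ s)) ^ m) := by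
  have hp2 := hp.out.two_le
  have hq2 : 2 ≤ p ^ s :=
    le_trans hp2 (by calc p = p ^ 1 := (pow_one p).symm
                        _ ≤ p ^ s := Nat.pow_le_pow_right (by omega) hs)
  have hK0 : (p : ℚ_[p]) ≠ 0 := Nat.cast_ne_zero.2 hp.out.ne_zero
  have hsum : ∑ m ∈ Finset.range (n + 1), PowerSeries.coeff m (hondaLog p s) *
      MvPowerSeries.coeff (Finsupp.single () n)
        (((MvPowerSeries.X () : MvPowerSeries Unit ℚ_[p]) ^ (p ^ s)) ^ m) =
      if p ^ s ∣ n then PowerSeries.coeff (n / p ^ s) (hondaLog p s) else 0 := by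
    by_cases hdvd : p ^ s ∣ n
    · rw [Finset.sum_eq_single_of_mem (n / p ^ s)
        (Finset.mem_range.2 (by have := Nat.div_le_self n (p ^ s); omega))]
      · rw [coeff_Xq_pow, if_pos (by rw [Nat.mul_div_cancel' hdvd]), mul_one, if_pos hdvd]
      · intro m _ hm
        rw [coeff_Xq_pow, if_neg, mul_zero]
        intro hcon
        refine hm ?_
        rw [hcon, Nat.mul_div_cancel_left m (by omega : 0 < p ^ s)]
    · rw [if_neg hdvd]
      refine Finset.sum_eq_zero fun m _ => ?_
      rw [coeff_Xq_pow, if_neg, mul_zero]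
      intro hcon
      exact hdvd ⟨m, hcon⟩
  rw [hsum]
  by_cases hex : ∃ i, n = p ^ (s * i)
  · obtain ⟨i, rfl⟩ := hex
    cases i with
    | zero =>
      have h1 : p ^ (s * 0) = 1 := by rw [Nat.mul_zero, pow_zero]
      rw [h1, hondaLog_coeff_one p s hs, mul_one, if_pos rfl, if_neg, add_zero]
      intro hcon
      have := Nat.le_of_dvd (by omega) hcon
      omega
    | succ i' =>
      have hrw : p ^ (s * (i' + 1)) = p ^ (s * i') * p ^ s := by
        rw [← pow_add, ← Nat.mul_succ]
      have hne1 : p ^ (s * (i' + 1)) ≠ 1 := by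
        rw [hrw]
        have h1 : 1 ≤ p ^ (s * i') := Nat.one_le_pow _ _ (by omega)
        nlinarith
      have hdvd : p ^ s ∣ p ^ (s * (i' + 1)) := ⟨p ^ (s * i'), by rw [hrw, Nat.mul_comm]⟩
      have hdiveq : p ^ (s * (i' + 1)) / p ^ s = p ^ (s * i') := by
        rw [hrw]; exact Nat.mul_div_cancel _ (by omega)
      rw [if_neg hne1, if_pos hdvd, hdiveq, zero_add,
        hondaLog_coeff_pow p s hs (i' + 1), hondaLog_coeff_pow p s hs i']
      rw [show (-((i' + 1 : ℕ) : ℤ)) = -1 + -(i' : ℤ) by push_cast; ring, zpow_add₀ hK0,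
        zpow_neg_one, ← mul_assoc, mul_inv_cancel₀ hK0, one_mul]
  · rw [hondaLog_coeff_zero p s hex, mul_zero, if_neg, zero_add]
    · by_cases hdvd : p ^ s ∣ n
      · rw [if_pos hdvd, hondaLog_coeff_zero p s]
        intro ⟨j, hj⟩
        exact hex ⟨j + 1, by rw [← Nat.div_mul_cancel hdvd, hj, ← pow_add, Nat.mul_succ]⟩
      · rw [if_neg hdvd]
    · intro hcon
      exact hex ⟨0, by rw [Nat.mul_zero, pow_zero, hcon]⟩

end Machinery10
/-- The `p`-series of the Honda formal group law of height `s` satisfies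
`[p]_F(x) = x^(pˢ)`. -/
theorem honda_p_series (p : ℕ) [Fact p.Prime] (s : ℕ) (hs : 1 ≤ s)
    (F : MvPowerSeries (Fin 2) (ZMod p)) (hF : IsHondaFGL p s F) :
    kSeries F p = (PowerSeries.X : PowerSeries (ZMod p)) ^ (p ^ s) := by
  obtain ⟨F₀, hc0, hlog, hFeq⟩ := hF
  have hprime : p.Prime := Fact.out
  have hp2 := hprime.two_le
  have hq2 : 2 ≤ p ^ s :=
    le_trans hp2 (by calc p = p ^ 1 := (pow_one p).symm
                        _ ≤ p ^ s := Nat.pow_le_pow_right (by omega) hs)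
  have hK0 : (p : ℚ_[p]) ≠ 0 := Nat.cast_ne_zero.2 hprime.ne_zero
  set ι : ℤ_[p] →+* ℚ_[p] := PadicInt.Coe.ringHom (p := p) with hι
  have hinj : Function.Injective ι := fun x y h => Subtype.ext h
  set q : ℕ := p ^ s with hq
  set a : PowerSeries ℤ_[p] := kSZ F₀ p with ha
  set b : PowerSeries ℤ_[p] := PowerSeries.X ^ q with hb
  have ha0 : PowerSeries.constantCoeff a = 0 := kSZ_constantCoeff hc0 p
  have hb0 : PowerSeries.constantCoeff b = 0 := by
    rw [hb, map_pow, PowerSeries.constantCoeff_X, zero_pow (by omega : q ≠ 0)]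
  have hGK0 : MvPowerSeries.constantCoeff
      (MvPowerSeries.map ι F₀) = 0 := by
    rw [MvPowerSeries.constantCoeff_map, hc0, map_zero]
  have hXu0 : MvPowerSeries.constantCoeff (MvPowerSeries.X () : MvPowerSeries Unit ℚ_[p]) = 0 :=
    MvPowerSeries.constantCoeff_X ()
  -- additivity of the logarithm under substitution into F₀
  have hAdd : ∀ u v : MvPowerSeries Unit ℚ_[p],
      MvPowerSeries.constantCoeff u = 0 →
      MvPowerSeries.constantCoeff v = 0 →
      substPS (subst2 u v (MvPowerSeries.map ι F₀)) (hondaLog p s) =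
        substPS u (hondaLog p s) + substPS v (hondaLog p s) := by
    intro u v hu hv
    rw [substPS_subst2 hu hv hGK0, hlog, subst2_add,
      ← substPS_subst2 hu hv (MvPowerSeries.constantCoeff_X 0),
      ← substPS_subst2 hu hv (MvPowerSeries.constantCoeff_X 1),
      subst2_X0 hu hv, subst2_X1 hu hv]
  -- the log of the k-series is k times the log
  have hspine : ∀ k, substPS (MvPowerSeries.map ι (kSZ F₀ (k + 1))) (hondaLog p s) =
      (k + 1) • substPS (MvPowerSeries.X () : MvPowerSeries Unit ℚ_[p]) (hondaLog p s) := by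
    intro k
    induction k with
    | zero =>
      have h1 : kSZ F₀ 1 = PowerSeries.X := rfl
      rw [h1, psX_eq, MvPowerSeries.map_X, zero_add, one_smul]
    | succ k ih =>
      have h2 : kSZ F₀ (k + 2) = subst2 (kSZ F₀ (k + 1)) PowerSeries.X F₀ := rfl
      have hu : MvPowerSeries.constantCoeff
          (MvPowerSeries.map ι (kSZ F₀ (k + 1))) = 0 := by
        rw [MvPowerSeries.constantCoeff_map, ← psConst_eq, kSZ_constantCoeff hc0, map_zero]
      rw [h2, subst2_map, psX_eq, MvPowerSeries.map_X, hAdd _ _ hu hXu0, ih, succ_nsmul, succ_nsmul, succ_nsmul]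
  have hEqP : substPS (MvPowerSeries.map ι a) (hondaLog p s) =
      p • substPS (MvPowerSeries.X () : MvPowerSeries Unit ℚ_[p]) (hondaLog p s) := by
    obtain ⟨k0, hk0⟩ : ∃ k0, p = k0 + 1 := ⟨p - 1, by omega⟩
    have h := hspine k0
    rw [← hk0] at h
    rw [ha]
    exact h
  have hA0 : MvPowerSeries.constantCoeff (MvPowerSeries.map ι a) = 0 := by
    rw [MvPowerSeries.constantCoeff_map, ← psConst_eq, ha0, map_zero]
  have hmapb : MvPowerSeries.map ι b =
      (MvPowerSeries.X () : MvPowerSeries Unit ℚ_[p]) ^ q := by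
    rw [hb, map_pow, psX_eq, MvPowerSeries.map_X]
  -- the coefficientwise equation
  have hEfin : ∀ n : ℕ, ∑ m ∈ Finset.range (n + 1),
        PowerSeries.coeff m (hondaLog p s) * ι (PowerSeries.coeff n (a ^ m)) =
      (if n = 1 then (p : ℚ_[p]) else 0) +
      ∑ m ∈ Finset.range (n + 1),
        PowerSeries.coeff m (hondaLog p s) * ι (PowerSeries.coeff n (b ^ m)) := by
    intro n
    have hcoeff := congrArg (MvPowerSeries.coeff (Finsupp.single () n)) hEqP
    rw [coeff_substPS hA0 (hondaLog p s) _ (N := n + 1) (by rw [unit_deg]; omega),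
      map_nsmul, coeff_substPS_X, nsmul_eq_mul] at hcoeff
    have hterm : ∀ m, MvPowerSeries.coeff (Finsupp.single () n)
        ((MvPowerSeries.map ι a) ^ m) = ι (PowerSeries.coeff n (a ^ m)) := by
      intro m
      rw [← map_pow, MvPowerSeries.coeff_map]
      rfl
    simp only [hterm] at hcoeff
    have htermb : ∀ m, MvPowerSeries.coeff (Finsupp.single () n)
        (((MvPowerSeries.X () : MvPowerSeries Unit ℚ_[p]) ^ q) ^ m) =
        ι (PowerSeries.coeff n (b ^ m)) := by
      intro m
      rw [← hmapb, ← map_pow, MvPowerSeries.coeff_map]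
      rfl
    have hPL := pl_identity p s hs n
    rw [← hq] at hPL
    simp only [htermb] at hPL
    rw [← hcoeff] at hPL
    exact hPL
  -- divisibility of coefficients
  have hdvd : ∀ n, (p : ℤ_[p]) ∣ PowerSeries.coeff n (a - b) := by
    intro n
    induction n using Nat.strong_induction_on with
    | _ n IH =>
    rcases Nat.eq_zero_or_pos n with rfl | hn
    · have h0 : PowerSeries.coeff 0 (a - b) = 0 := by
        rw [map_sub, PowerSeries.coeff_zero_eq_constantCoeff_apply,
          PowerSeries.coeff_zero_eq_constantCoeff_apply, ha0, hb0, sub_zero]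
      rw [h0]
      exact dvd_zero _
    · have hE := hEfin n
      have h1mem : 1 ∈ Finset.range (n + 1) := Finset.mem_range.2 (by omega)
      rw [← Finset.add_sum_erase _ _ h1mem, ← Finset.add_sum_erase
        (f := fun m => PowerSeries.coeff m (hondaLog p s) *
          ι (PowerSeries.coeff n (b ^ m))) _ h1mem,
        hondaLog_coeff_one p s hs, pow_one, pow_one, one_mul, one_mul] at hE
      have hEX : ∃ c : ℤ_[p], ∑ m ∈ (Finset.range (n + 1)).erase 1,
          PowerSeries.coeff m (hondaLog p s) *
            ι (PowerSeries.coeff n (a ^ m) - PowerSeries.coeff n (b ^ m)) =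
          ι (p * c) := by
        refine Finset.sum_induction _ (fun x => ∃ c : ℤ_[p], x = ι (p * c)) ?_ ⟨0, by simp⟩ ?_
        · rintro x y ⟨c1, rfl⟩ ⟨c2, rfl⟩
          exact ⟨c1 + c2, by rw [← map_add, ← mul_add]⟩
        · intro m hm
          rw [Finset.mem_erase, Finset.mem_range] at hm
          by_cases hex : ∃ i, m = p ^ (s * i)
          · obtain ⟨i, rfl⟩ := hex
            cases i with
            | zero => exact absurd (by rw [Nat.mul_zero, pow_zero]) hm.1
            | succ i' =>
              have hest := key_estimate p ha0 hb0
                (fun u hu => IH u hu) (j := s * (i' + 1))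
                (Nat.one_le_iff_ne_zero.2 (by positivity))
              have hle : (i' + 1) + 1 ≤ s * (i' + 1) + 1 := by
                have := Nat.le_mul_of_pos_left (i' + 1) (by omega : 0 < s)
                omega
              obtain ⟨z, hz⟩ := dvd_trans (pow_dvd_pow (p : ℤ_[p]) hle) hest
              refine ⟨z, ?_⟩
              rw [hondaLog_coeff_pow p s hs (i' + 1), ← map_sub (PowerSeries.coeff n),
                hz, map_mul, map_pow, map_natCast, map_mul, map_natCast]
              rw [show ((i' + 1) + 1 : ℕ) = ((i' + 1 + 1 : ℕ)) from rfl]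
              rw [← zpow_natCast (p : ℚ_[p]) (i' + 1 + 1), ← mul_assoc,
                ← zpow_add₀ hK0]
              congr 1
              · rw [show (-((i' + 1 : ℕ) : ℤ) + ((i' + 1 + 1 : ℕ) : ℤ)) = 1 by push_cast; ring,
                  zpow_one]
          · rw [hondaLog_coeff_zero p s hex, zero_mul]
            exact ⟨0, by simp⟩
      obtain ⟨c, hc⟩ := hEX
      have hcomb : (∑ m ∈ (Finset.range (n + 1)).erase 1,
            PowerSeries.coeff m (hondaLog p s) *
              ι (PowerSeries.coeff n (a ^ m))) -
          (∑ m ∈ (Finset.range (n + 1)).erase 1,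
            PowerSeries.coeff m (hondaLog p s) *
              ι (PowerSeries.coeff n (b ^ m))) = ι (p * c) := by
        rw [← Finset.sum_sub_distrib, ← hc]
        exact Finset.sum_congr rfl fun m _ => by rw [← mul_sub, ← map_sub]
      have hδ : (if n = 1 then (p : ℚ_[p]) else 0) =
          ι (p * (if n = 1 then 1 else 0)) := by
        split
        · rw [mul_one, map_natCast]
        · rw [mul_zero, map_zero]
      have hfinal : ι (PowerSeries.coeff n a - PowerSeries.coeff n b) =
          ι (p * ((if n = 1 then 1 else 0) - c)) := by
        rw [map_sub]
        have : ι (PowerSeries.coeff n a) - ι (PowerSeries.coeff n b) =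
            (if n = 1 then (p : ℚ_[p]) else 0) - ι (p * c) := by
          linear_combination hE - hcomb
        rw [this, hδ, ← map_sub, ← mul_sub]
      have := hinj hfinal
      rw [map_sub]
      exact ⟨_, this⟩
  -- reduce mod p
  rw [kSeries_eq_kSZ F p, hFeq, ← kSZ_map (PadicInt.toZMod (p := p)) F₀ p, ← ha]
  have hXq : (PowerSeries.X : PowerSeries (ZMod p)) ^ p ^ s =
      MvPowerSeries.map (PadicInt.toZMod (p := p)) b := by
    rw [hb, map_pow, psX_eq, psX_eq (R := ℤ_[p]), MvPowerSeries.map_X, ← hq]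
  rw [hXq]
  ext d
  obtain ⟨z, hz⟩ := hdvd d
  have hz' : PowerSeries.coeff d a - PowerSeries.coeff d b = (p : ℤ_[p]) * z := by
    rw [← hz, map_sub]
  have h1 : PadicInt.toZMod ((p : ℤ_[p]) * z) = 0 := by
    rw [map_mul, map_natCast, ZMod.natCast_self, zero_mul]
  have h2 := congrArg (PadicInt.toZMod (p := p)) hz'
  rw [map_sub, h1, sub_eq_zero] at h2
  rw [psCoeff_eq, psCoeff_eq, MvPowerSeries.coeff_map, MvPowerSeries.coeff_map]
  exact h2
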